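/- Let H be a topological group acting continuously on a locally compact Hausdorff topological space X, let K ⊆ H × X be compact, let x ∈ X, and let N ⊆ H × X be an open set containing {(h, y) ∈ K : y = x and h • y = x}. Then there exists a neighborhood V of x in X such that {(h, y) ∈ K : y ∈ V and h • y ∈ V} ⊆ N. -/

import Mathlib

open Topology

/-- Lemma 4 in the transformation-group case: if `K ⊆ H × X` is compact, `x ∈ X`, and
`N` is an open set containing `xKx = {(h, y) ∈ K : y = x ∧ h • y = x}`, then there is
a neighborhood `V` of `x` such that `VKV = {(h, y) ∈ K : y ∈ V ∧ h • y ∈ V} ⊆ N`. -/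
theorem stmt_7 {H X : Type*} [TopologicalSpace H] [Group H] [IsTopologicalGroup H]
    [TopologicalSpace X] [LocallyCompactSpace X] [T2Space X]
    [MulAction H X] [ContinuousSMul H X]
    (K : Set (H × X)) (hK : IsCompact K) (x : X)
    (N : Set (H × X)) (hN : IsOpen N)
    (hsub : {p : H × X | p ∈ K ∧ p.2 = x ∧ p.1 • p.2 = x} ⊆ N) :
    ∃ V ∈ 𝓝 x, {p : H × X | p ∈ K ∧ p.2 ∈ V ∧ p.1 • p.2 ∈ V} ⊆ N := by
  have hf : Continuous fun p : H × X => (p.2, p.1 • p.2) :=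
    continuous_snd.prodMk (continuous_fst.smul continuous_snd)
  set C : Set (X × X) := (fun p : H × X => (p.2, p.1 • p.2)) '' (K \ N) with hCdef
  have hCcomp : IsCompact C := (hK.diff hN).image hf
  have hxx : (x, x) ∉ C := by
    rintro ⟨p, ⟨hpK, hpN⟩, hpeq⟩
    exact hpN (hsub ⟨hpK, congrArg Prod.fst hpeq, congrArg Prod.snd hpeq⟩)
  have hmem : Cᶜ ∈ 𝓝 ((x, x) : X × X) :=
    hCcomp.isClosed.isOpen_compl.mem_nhds hxx
  rw [nhds_prod_eq, Filter.mem_prod_iff] at hmem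
  obtain ⟨V₁, hV₁, V₂, hV₂, hVsub⟩ := hmem
  refine ⟨V₁ ∩ V₂, Filter.inter_mem hV₁ hV₂, ?_⟩
  rintro p ⟨hpK, hp1, hp2⟩
  by_contra hpN
  exact hVsub (Set.mk_mem_prod hp1.1 hp2.2) ⟨p, ⟨hpK, hpN⟩, rfl⟩
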